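/- Let S be a semigroup and T a subsemigroup of S such that only finitely many L-classes of the T-biact _T S_T are contained in S∖T. Then: (1) if S is left stable, then T is left stable; and (2) T is left stable if and only if the T-biact _T S_T is left stable. -/

import Mathlib

/-! Green's preorders and equivalences on an `(S,T)`-biact, given by the left
action `sm : S → A → A` and the right action `rm : A → T → A`. -/

section BiactDefs

variable {S T A : Type*}

/-- `a ≤_L b` iff `a = b` or `a = s · b` for some `s ∈ S`. -/
def leLAct (sm : S → A → A) (a b : A) : Prop :=
  a = b ∨ ∃ s, a = sm s b

/-- `a ≤_R b` iff `a = b` or `a = b · t` for some `t ∈ T`. -/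
def leRAct (rm : A → T → A) (a b : A) : Prop :=
  a = b ∨ ∃ t, a = rm b t

/-- `a ≤_J b` iff `a = b`, or `a = s · b`, or `a = b · t`, or `a = s · b · t`. -/
def leJAct (sm : S → A → A) (rm : A → T → A) (a b : A) : Prop :=
  a = b ∨ (∃ s, a = sm s b) ∨ (∃ t, a = rm b t) ∨ ∃ s t, a = rm (sm s b) t

/-- Green's relation `L` on a biact. -/
def eqvLAct (sm : S → A → A) (a b : A) : Prop :=
  leLAct sm a b ∧ leLAct sm b a

/-- Green's relation `R` on a biact. -/
def eqvRAct (rm : A → T → A) (a b : A) : Prop :=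
  leRAct rm a b ∧ leRAct rm b a

/-- Green's relation `J` on a biact. -/
def eqvJAct (sm : S → A → A) (rm : A → T → A) (a b : A) : Prop :=
  leJAct sm rm a b ∧ leJAct sm rm b a

/-- `(sm, rm)` constitutes an `(S,T)`-biact structure on `A`. -/
def IsBiact [Semigroup S] [Semigroup T] (sm : S → A → A) (rm : A → T → A) : Prop :=
  (∀ (s s' : S) (a : A), sm s (sm s' a) = sm (s * s') a) ∧
  (∀ (a : A) (t t' : T), rm (rm a t) t' = rm a (t * t')) ∧
  (∀ (s : S) (a : A) (t : T), rm (sm s a) t = sm s (rm a t))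

/-- The minimal condition `M_L`: every descending `≤_L`-chain eventually stabilises. -/
def MinLAct (sm : S → A → A) : Prop :=
  ∀ f : ℕ → A, (∀ n, leLAct sm (f (n + 1)) (f n)) →
    ∃ m, ∀ n ≥ m, eqvLAct sm (f m) (f n)

/-- The minimal condition `M_R`. -/
def MinRAct (rm : A → T → A) : Prop :=
  ∀ f : ℕ → A, (∀ n, leRAct rm (f (n + 1)) (f n)) →
    ∃ m, ∀ n ≥ m, eqvRAct rm (f m) (f n)

/-- The minimal condition `M_J`. -/
def MinJAct (sm : S → A → A) (rm : A → T → A) : Prop :=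
  ∀ f : ℕ → A, (∀ n, leJAct sm rm (f (n + 1)) (f n)) →
    ∃ m, ∀ n ≥ m, eqvJAct sm rm (f m) (f n)

/-- A biact is left stable if `(s · a) J a` implies `(s · a) L a`. -/
def LeftStableAct (sm : S → A → A) (rm : A → T → A) : Prop :=
  ∀ (a : A) (s : S), eqvJAct sm rm (sm s a) a → eqvLAct sm (sm s a) a

/-- A biact is right stable if `(a · t) J a` implies `(a · t) R a`. -/
def RightStableAct (sm : S → A → A) (rm : A → T → A) : Prop :=
  ∀ (a : A) (t : T), eqvJAct sm rm (rm a t) a → eqvRAct rm (rm a t) a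

/-- A biact is stable if it is left and right stable. -/
def StableAct (sm : S → A → A) (rm : A → T → A) : Prop :=
  LeftStableAct sm rm ∧ RightStableAct sm rm

/-- A biact is `L`-periodic if for all `s, a` there is `n ≥ 1` with `(sⁿ · a) L (sⁿ⁺¹ · a)`. -/
def LPeriodicAct (sm : S → A → A) : Prop :=
  ∀ (s : S) (a : A), ∃ n : ℕ, 1 ≤ n ∧ eqvLAct sm ((sm s)^[n] a) ((sm s)^[n + 1] a)

/-- A biact is `R`-periodic if for all `t, a` there is `n ≥ 1` with `(a · tⁿ) R (a · tⁿ⁺¹)`. -/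
def RPeriodicAct (rm : A → T → A) : Prop :=
  ∀ (t : T) (a : A), ∃ n : ℕ, 1 ≤ n ∧
    eqvRAct rm ((fun x => rm x t)^[n] a) ((fun x => rm x t)^[n + 1] a)

end BiactDefs

/-! Relative Green's preorders on a semigroup `S`, with multipliers taken from a
subset `W ⊆ S`; taking `W = Set.univ` recovers the usual Green's preorders on `S`,
taking `W = T` for a subsemigroup `T` gives the relative (`T`-biact `_T S_T`)
relations, and restricting the carrier to `T` as well gives the relations of the
semigroup `T` itself. -/

section RelDefs

variable {S : Type*} [Semigroup S]

/-- `a ≤_L b` with multiplier in `W`. -/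
def leLW (W : Set S) (a b : S) : Prop := a = b ∨ ∃ t ∈ W, a = t * b

/-- `a ≤_R b` with multiplier in `W`. -/
def leRW (W : Set S) (a b : S) : Prop := a = b ∨ ∃ t ∈ W, a = b * t

/-- `a ≤_J b` with multipliers in `W`. -/
def leJW (W : Set S) (a b : S) : Prop :=
  a = b ∨ (∃ s ∈ W, a = s * b) ∨ (∃ t ∈ W, a = b * t) ∨ ∃ s ∈ W, ∃ t ∈ W, a = s * b * t

/-- Green's `L`-relation with multipliers in `W`. -/
def eqvLW (W : Set S) (a b : S) : Prop := leLW W a b ∧ leLW W b a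

/-- Green's `R`-relation with multipliers in `W`. -/
def eqvRW (W : Set S) (a b : S) : Prop := leRW W a b ∧ leRW W b a

/-- Green's `J`-relation with multipliers in `W`. -/
def eqvJW (W : Set S) (a b : S) : Prop := leJW W a b ∧ leJW W b a

/-- `M_L` for chains lying in the carrier `C`, with multipliers in `W`. -/
def MinLOn (W C : Set S) : Prop :=
  ∀ f : ℕ → S, (∀ n, f n ∈ C) → (∀ n, leLW W (f (n + 1)) (f n)) →
    ∃ m, ∀ n ≥ m, eqvLW W (f m) (f n)

/-- `M_R` for chains lying in the carrier `C`, with multipliers in `W`. -/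
def MinROn (W C : Set S) : Prop :=
  ∀ f : ℕ → S, (∀ n, f n ∈ C) → (∀ n, leRW W (f (n + 1)) (f n)) →
    ∃ m, ∀ n ≥ m, eqvRW W (f m) (f n)

/-- `M_J` for chains lying in the carrier `C`, with multipliers in `W`. -/
def MinJOn (W C : Set S) : Prop :=
  ∀ f : ℕ → S, (∀ n, f n ∈ C) → (∀ n, leJW W (f (n + 1)) (f n)) →
    ∃ m, ∀ n ≥ m, eqvJW W (f m) (f n)

/-- Left stability for elements of `C`, with multipliers in `W`. -/
def LeftStableOn (W C : Set S) : Prop :=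
  ∀ a ∈ C, ∀ s ∈ W, eqvJW W (s * a) a → eqvLW W (s * a) a

/-- Right stability for elements of `C`, with multipliers in `W`. -/
def RightStableOn (W C : Set S) : Prop :=
  ∀ a ∈ C, ∀ t ∈ W, eqvJW W (a * t) a → eqvRW W (a * t) a

/-- Stability (both left and right). -/
def StableOn (W C : Set S) : Prop := LeftStableOn W C ∧ RightStableOn W C

end RelDefs

section AuxProof

variable {S : Type*} [Semigroup S]

/-- the chain `a, p*a, p*(p*a), ...` -/
def Ach (p a : S) : ℕ → S
  | 0 => a
  | n+1 => p * Ach p a n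

/-- `Pch p k = p^(k+1)` -/
def Pch (p : S) : ℕ → S
  | 0 => p
  | k+1 => p * Pch p k

/-- `Rch r k = r^(k+1)` -/
def Rch (r : S) : ℕ → S
  | 0 => r
  | k+1 => Rch r k * r

lemma Pch_mul_right (p : S) : ∀ k, Pch p k * p = p * Pch p k
  | 0 => rfl
  | k+1 => by
      show (p * Pch p k) * p = p * (p * Pch p k)
      rw [mul_assoc, Pch_mul_right p k]

lemma Pch_succ_mul (p x : S) (d : ℕ) : Pch p (d+1) * x = Pch p d * (p * x) := by
  show (p * Pch p d) * x = Pch p d * (p * x)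
  rw [← Pch_mul_right, mul_assoc]

lemma Pch_mem {T : Set S} (hT : ∀ a ∈ T, ∀ b ∈ T, a * b ∈ T) {p : S} (hp : p ∈ T) :
    ∀ k, Pch p k ∈ T
  | 0 => hp
  | k+1 => hT p hp _ (Pch_mem hT hp k)

lemma Rch_mem {T : Set S} (hT : ∀ a ∈ T, ∀ b ∈ T, a * b ∈ T) {r : S} (hr : r ∈ T) :
    ∀ k, Rch r k ∈ T
  | 0 => hr
  | k+1 => hT _ (Rch_mem hT hr k) r hr

lemma Ach_add (p a : S) : ∀ (k m : ℕ), Ach p a (m + k + 1) = Pch p k * Ach p a m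
  | 0, m => rfl
  | k+1, m => by
      show Ach p a (m + (k+1) + 1) = (p * Pch p k) * Ach p a m
      have e : m + (k+1) + 1 = (m + k + 1) + 1 := by omega
      rw [e]
      show p * Ach p a (m + k + 1) = (p * Pch p k) * Ach p a m
      rw [Ach_add p a k m, mul_assoc]

lemma Ach_eq_pmul (p a : S) (h : a = (p * a) * r) :
    ∀ n, Ach p a n = (p * Ach p a n) * r
  | 0 => h
  | n+1 => by
      show p * Ach p a n = (p * (p * Ach p a n)) * r
      conv_lhs => rw [Ach_eq_pmul p a h n]
      rw [← mul_assoc]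

lemma Ach_mul_Rch {p a r : S} (h : a = (p * a) * r) :
    ∀ k, Ach p a (k+1) * Rch r k = a
  | 0 => by
      show (p * a) * r = a
      exact h.symm
  | k+1 => by
      show (p * Ach p a (k+1)) * (Rch r k * r) = a
      rw [mul_assoc, ← mul_assoc (Ach p a (k+1)), Ach_mul_Rch h k, ← mul_assoc]
      exact h.symm

/-- lifting: a relation `A j = X * A j` descends to `a = X * a`. -/
lemma Ach_lift {p a r : S} (h : a = (p * a) * r) (j : ℕ) (X : S)
    (hAj : Ach p a j = X * Ach p a j) : a = X * a := by
  cases j with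
  | zero => exact hAj
  | succ k =>
      calc a = Ach p a (k+1) * Rch r k := (Ach_mul_Rch h k).symm
      _ = (X * Ach p a (k+1)) * Rch r k := by rw [← hAj]
      _ = X * (Ach p a (k+1) * Rch r k) := mul_assoc _ _ _
      _ = X * a := by rw [Ach_mul_Rch h k]

lemma leLW_trans {T : Set S} (hT : ∀ a ∈ T, ∀ b ∈ T, a * b ∈ T) {a b c : S}
    (h1 : leLW T a b) (h2 : leLW T b c) : leLW T a c := by
  rcases h1 with rfl | ⟨t, ht, rfl⟩
  · exact h2
  · rcases h2 with rfl | ⟨t', ht', rfl⟩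
    · exact Or.inr ⟨t, ht, rfl⟩
    · exact Or.inr ⟨t * t', hT t ht t' ht', (mul_assoc t t' c).symm⟩

/-- the step lemma: a `leLW` drop along the chain gives the goal. -/
lemma Ach_step {T : Set S} (hT : ∀ a ∈ T, ∀ b ∈ T, a * b ∈ T) {a p r : S}
    (hp : p ∈ T) (h : a = (p * a) * r) (j d : ℕ)
    (H : leLW T (Ach p a j) (Ach p a (j + d + 1))) : leLW T a (p * a) := by
  rw [Ach_add p a d j] at H
  rcases H with H | ⟨w, hw, H⟩
  · have ha : a = Pch p d * a := Ach_lift h j _ H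
    cases d with
    | zero => exact Or.inl ha
    | succ d' =>
        rw [Pch_succ_mul] at ha
        exact Or.inr ⟨Pch p d', Pch_mem hT hp d', ha⟩
  · rw [← mul_assoc] at H
    have ha : a = (w * Pch p d) * a := Ach_lift h j _ H
    cases d with
    | zero =>
        rw [mul_assoc] at ha
        exact Or.inr ⟨w, hw, ha⟩
    | succ d' =>
        rw [mul_assoc, Pch_succ_mul, ← mul_assoc] at ha
        exact Or.inr ⟨w * Pch p d', hT w hw _ (Pch_mem hT hp d'), ha⟩

/-- The key lemma. -/
lemma key_lemma {T : Set S} (hT : ∀ a ∈ T, ∀ b ∈ T, a * b ∈ T)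
    (hfin : Finite (Quot fun a b : {x : S // x ∉ T} => eqvLW T a.1 b.1))
    (hstab : LeftStableOn T T ∨ LeftStableOn (Set.univ : Set S) Set.univ)
    (a p r : S) (hp : p ∈ T) (hr : r ∈ T) (h : a = (p * a) * r) :
    leLW T a (p * a) := by
  set Q := Quot fun a b : {x : S // x ∉ T} => eqvLW T a.1 b.1 with hQ
  have eqv : Equivalence (fun x y : {x : S // x ∉ T} => eqvLW T x.1 y.1) := by
    constructor
    · exact fun x => ⟨Or.inl rfl, Or.inl rfl⟩
    · exact fun h => ⟨h.2, h.1⟩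
    · exact fun h1 h2 => ⟨leLW_trans hT h1.1 h2.1, leLW_trans hT h2.2 h1.2⟩
  have qexact : ∀ x y : {x : S // x ∉ T},
      (Quot.mk _ x : Q) = Quot.mk _ y → eqvLW T x.1 y.1 := by
    intro x y hxy
    exact eqv.eqvGen_iff.mp (Quot.eqvGen_exact hxy)
  by_cases hc : ∃ m d, leLW T (Ach p a m) (Ach p a (m + d + 1))
  · obtain ⟨m, d, H⟩ := hc
    exact Ach_step hT hp h m d H
  · exfalso
    push_neg at hc
    rcases hstab with hTT | hSS
    · -- route via left stability of T
      by_cases hmem : ∃ n, Ach p a n ∈ T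
      · obtain ⟨n, hn⟩ := hmem
        have hJ : eqvJW T (p * Ach p a n) (Ach p a n) := by
          constructor
          · exact Or.inr (Or.inl ⟨p, hp, rfl⟩)
          · exact Or.inr (Or.inr (Or.inl ⟨r, hr, Ach_eq_pmul p a h n⟩))
        have hL := (hTT (Ach p a n) hn p hp hJ).2
        exact hc n 0 hL
      · push_neg at hmem
        obtain ⟨m, n, hmn, heq⟩ :=
          Finite.exists_ne_map_eq_of_infinite
            (fun n : ℕ => (Quot.mk _ ⟨Ach p a n, hmem n⟩ : Q))
        have heqv := qexact _ _ heq
        rcases Nat.lt_or_ge m n with hlt | hge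
        · have := heqv.1
          have e : m + (n - m - 1) + 1 = n := by omega
          exact hc m (n - m - 1) (by rw [e]; exact this)
        · have hlt : n < m := by omega
          have := heqv.2
          have e : n + (m - n - 1) + 1 = m := by omega
          exact hc n (m - n - 1) (by rw [e]; exact this)
    · -- route via left stability of S
      haveI : Fintype Q := Fintype.ofFinite Q
      set c := Fintype.card Q with hcQ
      have hAc1 : Ach p a (c + 1) = Pch p c * a := by
        have := Ach_add p a c 0
        rwa [Nat.zero_add] at this
      have hJ : eqvJW (Set.univ : Set S) (Pch p c * a) a := by
        constructor
        · exact Or.inr (Or.inl ⟨Pch p c, Set.mem_univ _, rfl⟩)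
        · refine Or.inr (Or.inr (Or.inl ⟨Rch r c, Set.mem_univ _, ?_⟩))
          rw [← hAc1]
          exact (Ach_mul_Rch h c).symm
      have hL := (hSS a (Set.mem_univ a) (Pch p c) (Set.mem_univ _) hJ).2
      rcases hL with hL | ⟨y, _, hy⟩
      · -- a = Pch p c * a, i.e. A 0 = A (c+1)
        have : leLW T (Ach p a 0) (Ach p a (0 + c + 1)) := by
          rw [Nat.zero_add, hAc1]
          exact Or.inl hL
        exact hc 0 c this
      · -- a = y * A (c+1)
        rw [← hAc1] at hy
        have hGA : ∀ j, Ach p y j * Ach p a (c+1) = Ach p a j := by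
          intro j
          induction j with
          | zero => exact hy.symm
          | succ k ih =>
              show (p * Ach p y k) * Ach p a (c+1) = p * Ach p a k
              rw [mul_assoc, ih]
        by_cases hG : ∃ j ≤ c, Ach p y j ∈ T
        · obtain ⟨j, hj, hGT⟩ := hG
          have e : j + (c - j) + 1 = c + 1 := by omega
          refine hc j (c - j) ?_
          rw [e]
          exact Or.inr ⟨Ach p y j, hGT, (hGA j).symm⟩
        · push_neg at hG
          obtain ⟨j, k, hjk, heq⟩ :=
            Fintype.exists_ne_map_eq_of_card_lt
              (fun j : Fin (c+1) =>
                (Quot.mk _ ⟨Ach p y j.1, hG j.1 (Nat.lt_succ_iff.mp j.2)⟩ : Q))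
              (by simp only [Fintype.card_fin]; exact Nat.lt_succ_of_le (le_of_eq (Fintype.card_congr' rfl)))
          have heqv := qexact _ _ heq
          have hne : (j : ℕ) ≠ (k : ℕ) := fun hh => hjk (Fin.ext hh)
          have main : ∀ j' k' : ℕ, j' < k' → leLW T (Ach p y j') (Ach p y k') → False := by
            intro j' k' hlt hle
            have e : j' + (k' - j' - 1) + 1 = k' := by omega
            refine hc j' (k' - j' - 1) ?_
            rw [e]
            rcases hle with hle | ⟨w, hw, hle⟩
            · exact Or.inl (by rw [← hGA j', hle, hGA k'])
            · refine Or.inr ⟨w, hw, ?_⟩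
              rw [← hGA j', hle, mul_assoc, hGA k']
          rcases Nat.lt_or_ge (j : ℕ) (k : ℕ) with hlt | hge
          · exact main j k hlt heqv.1
          · exact main k j (by omega) heqv.2

/-- The biact `_T S_T` is left stable, from either stability hypothesis. -/
lemma wrapper_lemma {T : Set S} (hT : ∀ a ∈ T, ∀ b ∈ T, a * b ∈ T)
    (hfin : Finite (Quot fun a b : {x : S // x ∉ T} => eqvLW T a.1 b.1))
    (hstab : LeftStableOn T T ∨ LeftStableOn (Set.univ : Set S) Set.univ) :
    LeftStableOn T (Set.univ : Set S) := by
  intro a _ t ht hJ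
  refine ⟨Or.inr ⟨t, ht, rfl⟩, ?_⟩
  rcases hJ.2 with h0 | ⟨s, hs, hse⟩ | ⟨r, hr, hre⟩ | ⟨s, hs, r, hr, hre⟩
  · exact Or.inl h0
  · exact Or.inr ⟨s, hs, hse⟩
  · exact key_lemma hT hfin hstab a t r ht hr hre
  · have h' : a = ((s * t) * a) * r := by rw [mul_assoc s t a]; exact hre
    rcases key_lemma hT hfin hstab a (s * t) r (hT s hs t ht) hr h' with h1 | ⟨u, hu, hue⟩
    · exact Or.inr ⟨s, hs, by rw [← mul_assoc]; exact h1⟩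
    · exact Or.inr ⟨u * s, hT u hu s hs, by rw [mul_assoc u s, ← mul_assoc s t]; exact hue⟩

end AuxProof

/-- Let `T` be a subsemigroup of `S` with only finitely many `L`-classes of the
`T`-biact `_T S_T` contained in `S \ T`.  Then: (1) if `S` is left stable then `T` is
left stable; (2) `T` is left stable iff the `T`-biact `_T S_T` is left stable. -/
theorem leftStable_subsemigroup_finitely_many_L_classes {S : Type*} [Semigroup S]
    (T : Set S) (hT0 : T.Nonempty) (hT : ∀ a ∈ T, ∀ b ∈ T, a * b ∈ T)
    (hfin : Finite (Quot fun a b : {x : S // x ∉ T} => eqvLW T a.1 b.1)) :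
    (LeftStableOn (Set.univ : Set S) Set.univ → LeftStableOn T T) ∧
    (LeftStableOn T T ↔ LeftStableOn T (Set.univ : Set S)) := by
  constructor
  · intro hS a ha s hs hJ
    exact wrapper_lemma hT hfin (Or.inr hS) a (Set.mem_univ a) s hs hJ
  · constructor
    · intro hTT
      exact wrapper_lemma hT hfin (Or.inl hTT)
    · intro hU a _ s hs hJ
      exact hU a (Set.mem_univ a) s hs hJ
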